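/- For every ε > 0 there exists δ > 0 (depending only on ε and V) such that the following holds. Let V = E₀ ⊕ ⋯ ⊕ E_s be any direct-sum decomposition of V into nonzero subspaces with κ(E₀,…,E_s) ≥ ε, let 1 ≤ i ≤ s, write Wⁱ = E₀ ⊕ ⋯ ⊕ E_i and Vⁱ = E_{i+1} ⊕ ⋯ ⊕ E_s, and let P = P_{(Vⁱ)^⊥} be the orthogonal projection onto (Vⁱ)^⊥. Then for all x, y ∈ Wⁱ, ‖Px ∧ Py‖ ≥ δ · ‖x ∧ y‖, i.e. (|Px|²|Py|² − ⟨Px,Py⟩²)^{1/2} ≥ δ · (|x|²|y|² − ⟨x,y⟩²)^{1/2}. -/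

import Mathlib

open scoped RealInnerProductSpace
open Filter

variable {V : Type*} [NormedAddCommGroup V] [InnerProductSpace ℝ V]

/-- The projective distance between the lines spanned by two nonzero vectors:
`d(x̄, ȳ) = (1 − ⟨x,y⟫²/(|x|²|y|²))^{1/2}`. -/
noncomputable def projDist (x y : V) : ℝ :=
  Real.sqrt (1 - ⟪x, y⟫ ^ 2 / (‖x‖ ^ 2 * ‖y‖ ^ 2))

/-- The distance `d(x̄, P(W))` from the line spanned by `x` to the projective space of the
submodule `W`. -/
noncomputable def projDistToSub (x : V) (W : Submodule ℝ V) : ℝ :=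
  sInf {r : ℝ | ∃ y : V, y ∈ W ∧ y ≠ 0 ∧ r = projDist x y}

/-- `κ(E₀,…,E_s)`: the minimal projective distance between nonzero vectors lying in sums of
disjoint subfamilies of the `E i`. -/
noncomputable def kappa {ι : Type*} (E : ι → Submodule ℝ V) : ℝ :=
  sInf {r : ℝ | ∃ (I J : Finset ι) (x y : V), I.Nonempty ∧ J.Nonempty ∧ Disjoint I J ∧
    x ∈ (⨆ i ∈ I, E i) ∧ x ≠ 0 ∧ y ∈ (⨆ j ∈ J, E j) ∧ y ≠ 0 ∧ r = projDist x y}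

/-- `Vⁱ = E_{i+1} ⊕ ⋯ ⊕ E_s`. -/
noncomputable def Vlow {s : ℕ} (E : Fin (s+1) → Submodule ℝ V) (i : ℕ) : Submodule ℝ V :=
  ⨆ j : Fin (s+1), ⨆ _ : i < (j : ℕ), E j

/-- `Wⁱ = E₀ ⊕ ⋯ ⊕ E_i`. -/
noncomputable def Whigh {s : ℕ} (E : Fin (s+1) → Submodule ℝ V) (i : ℕ) : Submodule ℝ V :=
  ⨆ j : Fin (s+1), ⨆ _ : (j : ℕ) ≤ i, E j

/-- `‖x ∧ y‖ = (|x|²|y|² − ⟨x,y⟫²)^{1/2}`, the area of the parallelogram spanned by `x, y`. -/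
noncomputable def wedgeNorm (x y : V) : ℝ :=
  Real.sqrt (‖x‖ ^ 2 * ‖y‖ ^ 2 - ⟪x, y⟫ ^ 2)

lemma wedge_nonneg (x y : V) : 0 ≤ wedgeNorm x y := Real.sqrt_nonneg _

lemma wedge_shift (a b : V) (c : ℝ) : wedgeNorm a (b - c • a) = wedgeNorm a b := by
  unfold wedgeNorm
  congr 1
  have ha : ⟪a, a⟫ = ‖a‖ ^ 2 := real_inner_self_eq_norm_sq a
  have hb : ‖b - c • a‖ ^ 2 = ⟪b - c • a, b - c • a⟫ := (real_inner_self_eq_norm_sq _).symm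
  rw [hb]
  simp only [inner_sub_left, inner_sub_right, real_inner_smul_left, real_inner_smul_right,
    real_inner_comm b a, ha]
  have hb' : ⟪b, b⟫ = ‖b‖ ^ 2 := real_inner_self_eq_norm_sq b
  rw [hb']
  ring

/-- Lemma 5.3 of the paper. For every `ε > 0` there is `δ > 0` such that
for every splitting `V = E₀ ⊕ ⋯ ⊕ E_s` with `κ(E₀,…,E_s) ≥ ε` and every `1 ≤ i ≤ s`,
all `x, y ∈ Wⁱ = E₀ ⊕ ⋯ ⊕ E_i` satisfy
`‖P_{(Vⁱ)^⊥}x ∧ P_{(Vⁱ)^⊥}y‖ ≥ δ · ‖x ∧ y‖`. -/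
theorem stmt10 [FiniteDimensional ℝ V] (hdim : 2 ≤ Module.finrank ℝ V) :
    ∀ ε > (0 : ℝ), ∃ δ > (0 : ℝ), ∀ (s : ℕ) (E : Fin (s+1) → Submodule ℝ V),
      DirectSum.IsInternal E → (∀ k, E k ≠ ⊥) → ε ≤ kappa E →
      ∀ i : ℕ, 1 ≤ i → i ≤ s →
      ∀ x ∈ Whigh E i, ∀ y ∈ Whigh E i,
        δ * wedgeNorm x y ≤
          wedgeNorm (Submodule.orthogonalProjectionOnto (Vlow E i)ᗮ x : V)
            (Submodule.orthogonalProjectionOnto (Vlow E i)ᗮ y : V) := by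
  intro ε hε
  set ε' := min ε 1 with hε'def
  have hε'pos : 0 < ε' := lt_min hε one_pos
  have hε'le1 : ε' ≤ 1 := min_le_right _ _
  refine ⟨ε' ^ 2, by positivity, ?_⟩
  intro s E hInt hbot hκ i hi1 his x hx y hy
  set K := (Vlow E i)ᗮ with hK
  -- Key lemma: the orthogonal projection onto K does not shrink vectors of Whigh too much.
  have key : ∀ z, z ∈ Whigh E i → ε' * ‖z‖ ≤ ‖(Submodule.orthogonalProjectionOnto K z : V)‖ := by
    intro z hz
    rcases eq_or_ne z 0 with rfl | hz0
    · simp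
    set Pz := (Submodule.orthogonalProjectionOnto K z : V) with hPzdef
    have hPzK : Pz ∈ K := SetLike.coe_mem _
    have hwmem : z - Pz ∈ Kᗮ := by exact K.sub_starProjection_mem_orthogonal z
    set w := z - Pz with hwdef
    have hwV : w ∈ Vlow E i := by
      rw [hK, Submodule.orthogonal_orthogonal] at hwmem
      exact hwmem
    have hinner : ⟪Pz, w⟫ = 0 := by
      rw [hK] at hPzK
      exact Submodule.inner_left_of_mem_orthogonal hwV hPzK
    have hzsum : z = Pz + w := by rw [hwdef]; abel
    have hnorm : ‖z‖ ^ 2 = ‖Pz‖ ^ 2 + ‖w‖ ^ 2 := by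
      have h := norm_add_sq_real Pz w
      rw [← hzsum, hinner] at h
      linarith
    rcases eq_or_ne w 0 with hw0 | hw0
    · have hPz : Pz = z := by
        have : z - Pz = 0 := hw0
        linear_combination (norm := abel) -this
      rw [hPz]
      nlinarith [norm_nonneg z]
    · have hzn : (0:ℝ) < ‖z‖ := norm_pos_iff.mpr hz0
      have hwn : (0:ℝ) < ‖w‖ := norm_pos_iff.mpr hw0
      have hd : ε ≤ projDist z w := by
        refine le_trans hκ (csInf_le ?_ ?_)
        · refine ⟨0, ?_⟩
          rintro r ⟨_, _, _, _, _, _, _, _, _, _, _, rfl⟩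
          exact Real.sqrt_nonneg _
        · obtain ⟨j₀, hj₀⟩ : ∃ j : Fin (s+1), i < (j : ℕ) := by
            by_contra h
            push_neg at h
            have hbotV : Vlow E i = ⊥ := by
              rw [Vlow]
              apply le_bot_iff.mp
              apply iSup_le
              intro j
              apply iSup_le
              intro hj
              exact absurd hj (h j).not_gt
            exact hw0 (by rwa [hbotV, Submodule.mem_bot] at hwV)
          have hIeq : (⨆ j ∈ Finset.univ.filter (fun j : Fin (s+1) => (j : ℕ) ≤ i), E j)
              = Whigh E i := by
            rw [Whigh]
            simp [Finset.mem_filter]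
          have hJeq : (⨆ j ∈ Finset.univ.filter (fun j : Fin (s+1) => i < (j : ℕ)), E j)
              = Vlow E i := by
            rw [Vlow]
            simp [Finset.mem_filter]
          refine ⟨Finset.univ.filter (fun j : Fin (s+1) => (j : ℕ) ≤ i),
            Finset.univ.filter (fun j : Fin (s+1) => i < (j : ℕ)), z, w,
            ⟨0, by simp⟩, ⟨j₀, by simp [hj₀]⟩, ?_, ?_, hz0, ?_, hw0, rfl⟩
          · rw [Finset.disjoint_left]
            intro a ha hb
            simp only [Finset.mem_filter, Finset.mem_univ, true_and] at ha hb
            omega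
          · rwa [hIeq]
          · rwa [hJeq]
      have hzw : ⟪z, w⟫ = ‖w‖ ^ 2 := by
        rw [hzsum, inner_add_left, hinner, real_inner_self_eq_norm_sq, zero_add]
      have hpd : projDist z w = ‖Pz‖ / ‖z‖ := by
        rw [projDist, hzw]
        have harg : 1 - (‖w‖ ^ 2) ^ 2 / (‖z‖ ^ 2 * ‖w‖ ^ 2) = (‖Pz‖ / ‖z‖) ^ 2 := by
          field_simp
          linear_combination hnorm
        rw [harg, Real.sqrt_sq (by positivity)]
      rw [hpd] at hd
      have hd' : ε' ≤ ‖Pz‖ / ‖z‖ := le_trans (min_le_left _ _) hd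
      calc ε' * ‖z‖ ≤ (‖Pz‖ / ‖z‖) * ‖z‖ := by nlinarith
        _ = ‖Pz‖ := by field_simp
  set Px := (Submodule.orthogonalProjectionOnto K x : V) with hPxdef
  set Py := (Submodule.orthogonalProjectionOnto K y : V) with hPydef
  by_cases hxy : ‖x‖ ^ 2 * ‖y‖ ^ 2 - ⟪x, y⟫ ^ 2 ≤ 0
  · have h0 : wedgeNorm x y = 0 := Real.sqrt_eq_zero'.mpr hxy
    rw [h0, mul_zero]
    exact wedge_nonneg _ _
  · push_neg at hxy
    have hx0 : x ≠ 0 := by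
      rintro rfl
      simp only [norm_zero, inner_zero_left] at hxy
      norm_num at hxy
    have hPx : ε' * ‖x‖ ≤ ‖Px‖ := key x hx
    have hxn : (0:ℝ) < ‖x‖ := norm_pos_iff.mpr hx0
    have hPxn : (0:ℝ) < ‖Px‖ := lt_of_lt_of_le (by positivity) hPx
    set c := ⟪Px, Py⟫ / ‖Px‖ ^ 2 with hc
    set y' := y - c • x with hy'def
    have hy' : y' ∈ Whigh E i := Submodule.sub_mem _ hy (Submodule.smul_mem _ _ hx)
    set Py' := (Submodule.orthogonalProjectionOnto K y' : V) with hPy'def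
    have hPy' : Py' = Py - c • Px := by
      rw [hPy'def, hy'def, map_sub, map_smul]
      push_cast
      rfl
    have hperp : ⟪Px, Py'⟫ = 0 := by
      rw [hPy', inner_sub_right, real_inner_smul_right, hc, real_inner_self_eq_norm_sq]
      field_simp
      ring
    have hkey2 : ε' * ‖y'‖ ≤ ‖Py'‖ := key y' hy'
    have e1 : wedgeNorm Px Py = wedgeNorm Px Py' := by
      rw [hPy', wedge_shift]
    have e2 : wedgeNorm Px Py' = ‖Px‖ * ‖Py'‖ := by
      rw [wedgeNorm, hperp]
      rw [show ‖Px‖ ^ 2 * ‖Py'‖ ^ 2 - (0:ℝ) ^ 2 = (‖Px‖ * ‖Py'‖) ^ 2 by ring]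
      exact Real.sqrt_sq (by positivity)
    have e3 : wedgeNorm x y' = wedgeNorm x y := by
      rw [hy'def, wedge_shift]
    have e4 : wedgeNorm x y' ≤ ‖x‖ * ‖y'‖ := by
      rw [wedgeNorm]
      calc Real.sqrt (‖x‖ ^ 2 * ‖y'‖ ^ 2 - ⟪x, y'⟫ ^ 2)
          ≤ Real.sqrt ((‖x‖ * ‖y'‖) ^ 2) := by
            apply Real.sqrt_le_sqrt
            nlinarith [sq_nonneg ⟪x, y'⟫]
        _ = ‖x‖ * ‖y'‖ := Real.sqrt_sq (by positivity)
    rw [e1, e2, ← e3]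
    calc ε' ^ 2 * wedgeNorm x y' ≤ ε' ^ 2 * (‖x‖ * ‖y'‖) :=
          mul_le_mul_of_nonneg_left e4 (by positivity)
      _ = (ε' * ‖x‖) * (ε' * ‖y'‖) := by ring
      _ ≤ ‖Px‖ * ‖Py'‖ := mul_le_mul hPx hkey2 (by positivity) hPxn.le
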